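/- Let f be a sense-preserving harmonic mapping on the unit disk D and let γ(s), 0 ≤ s ≤ L, be a smooth curve in D parametrized by hyperbolic arclength, so that γ'(s) = (1-|γ(s)|²)e^{iθ(s)} for some real function θ. Then (d/ds) log((1-|γ(s)|²)·J_f(γ(s))^{1/2}) = 2·Re(A_f(γ(s))·e^{iθ(s)}) for all s. Consequently, if |A_f(z)| ≤ α on D, then for any z₀, z₁ ∈ D, exp(-2αρ(z₀,z₁)) ≤ ((1-|z₁|²)J_f(z₁)^{1/2})/((1-|z₀|²)J_f(z₀)^{1/2}) ≤ exp(2αρ(z₀,z₁)), where ρ is the hyperbolic (Poincaré) distance on D. -/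

import Mathlib

open Complex Metric Set

noncomputable section

/-- The open unit disk in ℂ. -/
def 𝔻 : Set ℂ := Metric.ball (0 : ℂ) 1

/-- Dilatation ω = g'/h' of a harmonic mapping f = h + conj g. -/
def dil (h g : ℂ → ℂ) (z : ℂ) : ℂ := deriv g z / deriv h z

/-- Harmonic pre-Schwarzian P_f = h''/h' - conj(ω)·ω'/(1-|ω|²). -/
def Pf (h g : ℂ → ℂ) (z : ℂ) : ℂ :=
  deriv (deriv h) z / deriv h z -
    (starRingEnd ℂ) (dil h g z) * deriv (dil h g) z /
      (((1 - ‖(dil h g z)‖ ^ 2 : ℝ) : ℂ))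

/-- The operator A_f(z) = ((1-|z|²)/2)·P_f(z) - conj z. -/
def Af (h g : ℂ → ℂ) (z : ℂ) : ℂ :=
  (((1 - ‖z‖ ^ 2 : ℝ) : ℂ)) / 2 * Pf h g z - (starRingEnd ℂ) z

/-- The operator A_φ for an analytic φ. -/
def Aan (φ : ℂ → ℂ) (z : ℂ) : ℂ :=
  (((1 - ‖z‖ ^ 2 : ℝ) : ℂ)) / 2 * (deriv (deriv φ) z / deriv φ z) -
    (starRingEnd ℂ) z

/-- Jacobian J_f = |h'|² - |g'|². -/
def Jf (h g : ℂ → ℂ) (z : ℂ) : ℝ :=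
  ‖(deriv h z)‖ ^ 2 - ‖(deriv g z)‖ ^ 2

/-- f = h + conj g is a sense-preserving harmonic mapping on 𝔻. -/
def SensePreserving (h g : ℂ → ℂ) : Prop :=
  (∀ z ∈ 𝔻, AnalyticAt ℂ h z) ∧ (∀ z ∈ 𝔻, AnalyticAt ℂ g z) ∧
  (∀ z ∈ 𝔻, deriv h z ≠ 0) ∧ (∀ z ∈ 𝔻, ‖(dil h g z)‖ < 1)

/-- Hyperbolic (Poincaré) distance on 𝔻, with density 1/(1-|z|²). -/
def hypDist (z w : ℂ) : ℝ :=
  (1 / 2) * Real.log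
    ((1 + ‖((z - w) / (1 - (starRingEnd ℂ) w * z))‖) /
     (1 - ‖((z - w) / (1 - (starRingEnd ℂ) w * z))‖))

/-- Wirtinger derivative ∂_z of a real-valued function. -/
def wirtinger (u : ℂ → ℝ) (z : ℂ) : ℂ :=
  ((fderiv ℝ u z 1 : ℝ) : ℂ) / 2 - Complex.I * ((fderiv ℝ u z Complex.I : ℝ) : ℂ) / 2

lemma hasDerivAt_normSq_comp {F : ℝ → ℂ} {F' : ℂ} {s : ℝ} (hF : HasDerivAt F F' s) :
    HasDerivAt (fun t => Complex.normSq (F t)) (2 * (((starRingEnd ℂ) (F s)) * F').re) s := by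
  have hre : HasDerivAt (fun t => (F t).re) F'.re s :=
    Complex.reCLM.hasFDerivAt.comp_hasDerivAt s hF
  have him : HasDerivAt (fun t => (F t).im) F'.im s :=
    Complex.imCLM.hasFDerivAt.comp_hasDerivAt s hF
  have h2 : HasDerivAt (fun t => (F t).re * (F t).re + (F t).im * (F t).im)
      ((F'.re * (F s).re + (F s).re * F'.re) + (F'.im * (F s).im + (F s).im * F'.im)) s :=
    (hre.mul hre).add (him.mul him)
  have : (2 : ℝ) * (((starRingEnd ℂ) (F s)) * F').re
      = (F'.re * (F s).re + (F s).re * F'.re) + (F'.im * (F s).im + (F s).im * F'.im) := by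
    simp [Complex.mul_re]; ring
  rw [this]
  simpa only [Complex.normSq_apply] using h2

-- basic positivity facts
lemma mem_disk_iff {z : ℂ} : z ∈ 𝔻 ↔ ‖z‖ < 1 := by
  simp [𝔻, Metric.mem_ball, Complex.dist_eq]

lemma one_sub_normSq_pos {z : ℂ} (hz : z ∈ 𝔻) : 0 < 1 - Complex.normSq z := by
  rw [mem_disk_iff] at hz
  have : Complex.normSq z < 1 := by
    rw [← Complex.sq_norm]; nlinarith [norm_nonneg z]
  linarith

lemma Jf_eq (h g : ℂ → ℂ) {z : ℂ} (hh : deriv h z ≠ 0) :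
    Jf h g z = Complex.normSq (deriv h z) * (1 - Complex.normSq (dil h g z)) := by
  have hg : deriv g z = dil h g z * deriv h z := (div_mul_cancel₀ _ hh).symm
  rw [Jf, hg]
  simp [map_mul, mul_pow, Complex.sq_norm]
  ring

lemma Jf_pos (h g : ℂ → ℂ) {z : ℂ} (hh : deriv h z ≠ 0) (hd : ‖(dil h g z)‖ < 1) :
    0 < Jf h g z := by
  rw [Jf_eq h g hh]
  have h1 : 0 < Complex.normSq (deriv h z) := Complex.normSq_pos.2 hh
  have h2 : Complex.normSq (dil h g z) < 1 := by
    rw [← Complex.sq_norm]; nlinarith [norm_nonneg (dil h g z)]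
  nlinarith

lemma logP_decomp (h g : ℂ → ℂ) (hf : SensePreserving h g) {w : ℂ} (hw : w ∈ 𝔻) :
    Real.log ((1 - ‖w‖ ^ 2) * Real.sqrt (Jf h g w))
      = Real.log (1 - Complex.normSq w) + (1/2) * Real.log (Complex.normSq (deriv h w))
        + (1/2) * Real.log (1 - Complex.normSq (dil h g w)) := by
  obtain ⟨hh, hg, hh', hd⟩ := hf
  have hA : 0 < 1 - Complex.normSq w := one_sub_normSq_pos hw
  have hB : 0 < Complex.normSq (deriv h w) := Complex.normSq_pos.2 (hh' w hw)
  have hC : 0 < 1 - Complex.normSq (dil h g w) := by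
    have h2 : Complex.normSq (dil h g w) < 1 := by
      rw [← Complex.sq_norm]; nlinarith [norm_nonneg (dil h g w), hd w hw]
    linarith
  have hJ : 0 < Jf h g w := Jf_pos h g (hh' w hw) (hd w hw)
  have habs : (1 : ℝ) - ‖w‖ ^ 2 = 1 - Complex.normSq w := by rw [Complex.sq_norm]
  rw [habs, Real.log_mul (by positivity) (by positivity), Real.log_sqrt hJ.le,
    Jf_eq h g (hh' w hw), Real.log_mul (by positivity) (by positivity)]
  ring

lemma re_identity (c nC : ℝ) (hc : c ≠ 0) (hnC : nC ≠ 0) (z h₁ H W W' E : ℂ) (hh₁ : h₁ ≠ 0) :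
    (c⁻¹ * (-(2 * (((starRingEnd ℂ) z) * ((c : ℂ) * E)).re))
      + (1/2) * ((Complex.normSq h₁)⁻¹ * (2 * (((starRingEnd ℂ) h₁) * (((c:ℂ)*E) • H)).re))
      + (1/2) * (nC⁻¹ * (-(2 * (((starRingEnd ℂ) W) * (((c:ℂ)*E) • W')).re))))
    = 2 * ((((c : ℂ))/2 * (H/h₁ - (starRingEnd ℂ) W * W' / (nC : ℂ)) - (starRingEnd ℂ) z) * E).re := by
  have hre : ∀ (r : ℝ) (x : ℂ), r * x.re = ((r : ℂ) * x).re := fun r x =>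
    (Complex.re_ofReal_mul r x).symm
  have hconj : ((Complex.normSq h₁ : ℝ) : ℂ) = h₁ * (starRingEnd ℂ) h₁ := (Complex.mul_conj h₁).symm
  have hch : (starRingEnd ℂ) h₁ ≠ 0 := by simpa using hh₁
  have LHSc : (c⁻¹ * (-(2 * (((starRingEnd ℂ) z) * ((c : ℂ) * E)).re))
      + (1/2) * ((Complex.normSq h₁)⁻¹ * (2 * (((starRingEnd ℂ) h₁) * (((c:ℂ)*E) • H)).re))
      + (1/2) * (nC⁻¹ * (-(2 * (((starRingEnd ℂ) W) * (((c:ℂ)*E) • W')).re))))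
      = (((c⁻¹ : ℝ) : ℂ) * (-(2 * (((starRingEnd ℂ) z) * ((c : ℂ) * E))))
      + ((1/2 : ℝ) : ℂ) * (((Complex.normSq h₁)⁻¹ : ℝ) * (2 * (((starRingEnd ℂ) h₁) * (((c:ℂ)*E) * H))))
      + ((1/2 : ℝ) : ℂ) * ((nC⁻¹ : ℝ) * (-(2 * (((starRingEnd ℂ) W) * (((c:ℂ)*E) * W')))))).re := by
    simp only [smul_eq_mul, Complex.add_re, Complex.re_ofReal_mul, Complex.neg_re,
      Complex.mul_re, Complex.mul_im, Complex.re_ofNat, Complex.im_ofNat,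
      Complex.ofReal_re, Complex.ofReal_im, Complex.conj_re, Complex.conj_im]
    ring
  rw [LHSc]
  have RHSc : 2 * ((((c : ℂ))/2 * (H/h₁ - (starRingEnd ℂ) W * W' / (nC : ℂ)) - (starRingEnd ℂ) z) * E).re
      = (((2:ℝ) : ℂ) * ((((c : ℂ))/2 * (H/h₁ - (starRingEnd ℂ) W * W' / (nC : ℂ)) - (starRingEnd ℂ) z) * E)).re := by
    simp [Complex.mul_re]
  rw [RHSc]
  congr 1
  have hnC' : ((nC : ℝ) : ℂ) ≠ 0 := by exact_mod_cast Complex.ofReal_ne_zero.2 hnC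
  have hc' : ((c : ℝ) : ℂ) ≠ 0 := Complex.ofReal_ne_zero.2 hc
  have hnB' : ((Complex.normSq h₁ : ℝ) : ℂ) ≠ 0 := by
    rw [hconj]; exact mul_ne_zero hh₁ hch
  push_cast
  rw [hconj]
  field_simp
  ring

def tgh (s : ℝ) : ℝ := (Real.exp (2*s) - 1)/(Real.exp (2*s) + 1)

lemma tgh_zero : tgh 0 = 0 := by simp [tgh]

lemma exp_pos' (s : ℝ) : 0 < Real.exp (2*s) := Real.exp_pos _

lemma tgh_abs_lt_one (s : ℝ) : |tgh s| < 1 := by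
  have h := exp_pos' s
  rw [abs_lt, tgh]
  constructor
  · rw [lt_div_iff₀ (by linarith)]; linarith
  · rw [div_lt_iff₀ (by linarith)]; linarith

lemma hasDerivAt_tgh (s : ℝ) : HasDerivAt tgh (1 - tgh s ^ 2) s := by
  have hE : HasDerivAt (fun s : ℝ => Real.exp (2*s)) (Real.exp (2*s) * 2) s := by
    have h1 : HasDerivAt (fun s : ℝ => 2*s) 2 s := by
      simpa using (hasDerivAt_id s).const_mul (2:ℝ)
    exact (Real.hasDerivAt_exp (2*s)).comp s h1
  have hne : Real.exp (2*s) + 1 ≠ 0 := by positivity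
  have hd := ((hE.sub_const 1).div (hE.add_const 1) hne)
  refine hd.congr_deriv ?_
  unfold tgh
  field_simp
  ring

lemma tgh_log {r : ℝ} (h0 : 0 ≤ r) (h1 : r < 1) :
    tgh ((1/2) * Real.log ((1+r)/(1-r))) = r := by
  have h1r : (1:ℝ) - r ≠ 0 := by linarith
  have hpos : 0 < (1+r)/(1-r) := div_pos (by linarith) (by linarith)
  have he : Real.exp (2 * ((1/2) * Real.log ((1+r)/(1-r)))) = (1+r)/(1-r) := by
    rw [show (2 : ℝ) * ((1/2) * Real.log ((1+r)/(1-r))) = Real.log ((1+r)/(1-r)) by ring]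
    exact Real.exp_log hpos
  rw [tgh, he]
  field_simp
  ring

lemma normSq_moebius (z w : ℂ) :
    Complex.normSq (1 - (starRingEnd ℂ) w * z) - Complex.normSq (z - w)
      = (1 - Complex.normSq z) * (1 - Complex.normSq w) := by
  simp only [Complex.normSq_apply, Complex.sub_re, Complex.sub_im, Complex.mul_re,
    Complex.mul_im, Complex.one_re, Complex.one_im, Complex.conj_re, Complex.conj_im]
  ring

lemma abs_lt_abs_of_normSq_lt {a b : ℂ} (hl : Complex.normSq a < Complex.normSq b) :
    ‖a‖ < ‖b‖ := by
  rw [Complex.norm_def, Complex.norm_def]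
  exact Real.sqrt_lt_sqrt (Complex.normSq_nonneg a) hl

lemma abs_lt_one_of_normSq_lt_one {a : ℂ} (hl : Complex.normSq a < 1) :
    ‖a‖ < 1 := by
  have := abs_lt_abs_of_normSq_lt (b := 1) (by simpa using hl)
  simpa using this

lemma one_add_ne {x : ℂ} (hx : ‖x‖ < 1) : (1 : ℂ) + x ≠ 0 := by
  intro hcon
  have hx1 : x = -1 := by linear_combination hcon
  rw [hx1] at hx
  simp at hx

lemma normSq_line (z₀ η : ℂ) (t : ℝ) (hη : Complex.normSq η = 1) :
    Complex.normSq (1 + (starRingEnd ℂ) z₀ * η * (t:ℂ)) - Complex.normSq (z₀ + η * (t:ℂ))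
      = (1 - Complex.normSq z₀) * (1 - t^2) := by
  have hη' : η.re*η.re + η.im*η.im = 1 := by simpa [Complex.normSq_apply] using hη
  simp only [Complex.normSq_apply, Complex.add_re, Complex.add_im, Complex.mul_re,
    Complex.mul_im, Complex.one_re, Complex.one_im, Complex.conj_re, Complex.conj_im,
    Complex.ofReal_re, Complex.ofReal_im]
  linear_combination (t^2*(z₀.re*z₀.re+z₀.im*z₀.im-1)) * hη'


lemma curve_deriv_val (z₀ η : ℂ) (t cγ : ℝ)
    (hDn : (1:ℂ) + (starRingEnd ℂ) z₀ * η * (t:ℂ) ≠ 0)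
    (hcγ : cγ = (1 - Complex.normSq z₀) * (1 - t^2)
        / Complex.normSq (1 + (starRingEnd ℂ) z₀ * η * (t:ℂ))) :
    ((cγ : ℝ) : ℂ) * (η * (starRingEnd ℂ) (1 + (starRingEnd ℂ) z₀ * η * (t:ℂ))
        / (1 + (starRingEnd ℂ) z₀ * η * (t:ℂ)))
      = (η * ((1 - t^2 : ℝ) : ℂ) * (1 + (starRingEnd ℂ) z₀ * η * (t:ℂ))
          - (z₀ + η * (t:ℂ)) * ((starRingEnd ℂ) z₀ * η * ((1 - t^2 : ℝ) : ℂ)))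
        / (1 + (starRingEnd ℂ) z₀ * η * (t:ℂ)) ^ 2 := by
  have hC : (starRingEnd ℂ) (1 + (starRingEnd ℂ) z₀ * η * (t:ℂ)) ≠ 0 := by
    intro hcc
    apply hDn
    have h3 := congrArg (starRingEnd ℂ) hcc
    simpa using h3
  have hmc : ((Complex.normSq (1 + (starRingEnd ℂ) z₀ * η * (t:ℂ)) : ℝ) : ℂ)
      = (1 + (starRingEnd ℂ) z₀ * η * (t:ℂ))
        * (starRingEnd ℂ) (1 + (starRingEnd ℂ) z₀ * η * (t:ℂ)) :=
    (Complex.mul_conj _).symm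
  have hmz : ((Complex.normSq z₀ : ℝ) : ℂ) = z₀ * (starRingEnd ℂ) z₀ := (Complex.mul_conj z₀).symm
  rw [hcγ]
  push_cast
  rw [hmc, hmz]
  generalize hCg : (starRingEnd ℂ) (1 + (starRingEnd ℂ) z₀ * η * (t:ℂ)) = C at hC ⊢
  field_simp [hDn, hC]
  ring

set_option maxHeartbeats 1000000 in
lemma geodesic_exists {z₀ z₁ : ℂ} (h₀ : z₀ ∈ 𝔻) (h₁ : z₁ ∈ 𝔻) (hne : z₁ ≠ z₀) :
    ∃ (γ : ℝ → ℂ) (θ : ℝ → ℝ),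
      γ 0 = z₀ ∧ γ (hypDist z₀ z₁) = z₁ ∧ 0 ≤ hypDist z₀ z₁ ∧
      (∀ s : ℝ, γ s ∈ 𝔻) ∧
      (∀ s : ℝ, HasDerivAt γ
        (((1 - ‖(γ s)‖ ^ 2 : ℝ) : ℂ) * Complex.exp (Complex.I * (θ s : ℂ))) s) := by
  have habs₀ : ‖z₀‖ < 1 := mem_disk_iff.1 h₀
  have habs₁ : ‖z₁‖ < 1 := mem_disk_iff.1 h₁
  obtain ⟨d, hd_def⟩ : ∃ d : ℂ, d = 1 - (starRingEnd ℂ) z₀ * z₁ := ⟨_, rfl⟩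
  have hd : d ≠ 0 := by
    intro hcon
    have h2 : (starRingEnd ℂ) z₀ * z₁ = 1 := by rw [hcon] at hd_def; linear_combination hd_def
    have h3 : ‖((starRingEnd ℂ) z₀ * z₁)‖ = 1 := by rw [h2, norm_one]
    rw [norm_mul, Complex.norm_conj] at h3
    nlinarith [norm_nonneg z₀, norm_nonneg z₁]
  obtain ⟨u, hu_def⟩ : ∃ u : ℂ, u = (z₁ - z₀) / d := ⟨_, rfl⟩
  have hu : u ≠ 0 := hu_def ▸ div_ne_zero (sub_ne_zero.2 hne) hd
  obtain ⟨r, hr_def⟩ : ∃ r : ℝ, r = ‖u‖ := ⟨_, rfl⟩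
  have hr0 : 0 < r := hr_def ▸ norm_pos_iff.mpr hu
  have hr1 : r < 1 := by
    have hmo := normSq_moebius z₁ z₀
    have e₀ : Complex.normSq z₀ < 1 := by
      rw [← Complex.sq_norm]; nlinarith [norm_nonneg z₀]
    have e₁ : Complex.normSq z₁ < 1 := by
      rw [← Complex.sq_norm]; nlinarith [norm_nonneg z₁]
    have hlt : Complex.normSq (z₁ - z₀) < Complex.normSq (1 - (starRingEnd ℂ) z₀ * z₁) := by
      nlinarith [hmo]
    have h5 := abs_lt_abs_of_normSq_lt hlt
    rw [hr_def, hu_def, hd_def, norm_div, div_lt_one (norm_pos_iff.mpr (hd_def ▸ hd))]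
    exact h5
  have hrC : (r : ℂ) ≠ 0 := Complex.ofReal_ne_zero.2 hr0.ne'
  obtain ⟨η, hη_def⟩ : ∃ η : ℂ, η = u / (r : ℂ) := ⟨_, rfl⟩
  have hηr : η * (r : ℂ) = u := by rw [hη_def, div_mul_cancel₀ _ hrC]
  have habsη : ‖η‖ = 1 := by
    rw [hη_def, norm_div, Complex.norm_of_nonneg hr0.le, ← hr_def, div_self hr0.ne']
  have hnormSqη : Complex.normSq η = 1 := by rw [← Complex.sq_norm, habsη]; norm_num
  set γ : ℝ → ℂ := fun s => (z₀ + η * (tgh s : ℂ)) / (1 + (starRingEnd ℂ) z₀ * η * (tgh s : ℂ))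
    with hγ_def
  have hDn : ∀ s : ℝ, (1 : ℂ) + (starRingEnd ℂ) z₀ * η * (tgh s : ℂ) ≠ 0 := by
    intro s
    apply one_add_ne
    rw [norm_mul, norm_mul, Complex.norm_conj, habsη, Complex.norm_real, Real.norm_eq_abs]
    have := tgh_abs_lt_one s
    nlinarith [norm_nonneg z₀]
  have hkey : ∀ s : ℝ, Complex.normSq (1 + (starRingEnd ℂ) z₀ * η * (tgh s : ℂ))
      - Complex.normSq (z₀ + η * (tgh s : ℂ))
      = (1 - Complex.normSq z₀) * (1 - tgh s ^ 2) := fun s => normSq_line z₀ η (tgh s) hnormSqη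
  have hz₀sq : Complex.normSq z₀ < 1 := by
    rw [← Complex.sq_norm]; nlinarith [norm_nonneg z₀]
  have htsq : ∀ s : ℝ, tgh s ^ 2 < 1 := by
    intro s; have := tgh_abs_lt_one s
    nlinarith [abs_nonneg (tgh s), _root_.sq_abs (tgh s)]
  have hDnSq : ∀ s : ℝ, 0 < Complex.normSq (1 + (starRingEnd ℂ) z₀ * η * (tgh s : ℂ)) :=
    fun s => Complex.normSq_pos.2 (hDn s)
  have habsγ : ∀ s : ℝ, 1 - ‖(γ s)‖ ^ 2
      = (1 - Complex.normSq z₀) * (1 - tgh s ^ 2)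
        / Complex.normSq (1 + (starRingEnd ℂ) z₀ * η * (tgh s : ℂ)) := by
    intro s
    have hne' := (hDnSq s).ne'
    rw [Complex.sq_norm]
    show 1 - Complex.normSq ((z₀ + η * (tgh s : ℂ)) / (1 + (starRingEnd ℂ) z₀ * η * (tgh s : ℂ))) = _
    rw [Complex.normSq_div, ← hkey s, eq_div_iff hne', sub_mul, div_mul_cancel₀ _ hne', one_mul]
  have hmemγ : ∀ s : ℝ, γ s ∈ 𝔻 := by
    intro s
    rw [mem_disk_iff]
    apply abs_lt_one_of_normSq_lt_one
    have h2 := habsγ s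
    rw [Complex.sq_norm] at h2
    have h3 : 0 < (1 - Complex.normSq z₀) * (1 - tgh s ^ 2)
        / Complex.normSq (1 + (starRingEnd ℂ) z₀ * η * (tgh s : ℂ)) := by
      have := htsq s; have := hDnSq s
      exact div_pos (by nlinarith) this
    linarith
  have hderγ : ∀ s : ℝ, HasDerivAt γ
      (((1 - ‖(γ s)‖ ^ 2 : ℝ) : ℂ) *
        (η * (starRingEnd ℂ) (1 + (starRingEnd ℂ) z₀ * η * (tgh s : ℂ))
          / (1 + (starRingEnd ℂ) z₀ * η * (tgh s : ℂ)))) s := by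
    intro s
    have htC : HasDerivAt (fun s' => ((tgh s' : ℝ) : ℂ)) (((1 - tgh s ^ 2 : ℝ) : ℂ)) s :=
      Complex.ofRealCLM.hasFDerivAt.comp_hasDerivAt s (hasDerivAt_tgh s)
    have hN : HasDerivAt (fun s' => z₀ + η * ((tgh s' : ℝ) : ℂ))
        (η * ((1 - tgh s ^ 2 : ℝ) : ℂ)) s := (htC.const_mul η).const_add z₀
    have hDd : HasDerivAt (fun s' => (1 : ℂ) + (starRingEnd ℂ) z₀ * η * ((tgh s' : ℝ) : ℂ))
        ((starRingEnd ℂ) z₀ * η * ((1 - tgh s ^ 2 : ℝ) : ℂ)) s :=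
      (htC.const_mul ((starRingEnd ℂ) z₀ * η)).const_add 1
    have hdiv := hN.div hDd (hDn s)
    exact hdiv.congr_deriv (curve_deriv_val z₀ η (tgh s) (1 - ‖(γ s)‖ ^ 2) (hDn s) (habsγ s)).symm
  have hγ0 : γ 0 = z₀ := by
    show (z₀ + η * ((tgh 0 : ℝ) : ℂ)) / (1 + (starRingEnd ℂ) z₀ * η * ((tgh 0 : ℝ) : ℂ)) = z₀
    rw [tgh_zero]
    simp
  have habs_eq : ‖((z₀ - z₁) / (1 - (starRingEnd ℂ) z₁ * z₀))‖ = r := by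
    have e1 : ‖(z₀ - z₁)‖ = ‖(z₁ - z₀)‖ := norm_sub_rev z₀ z₁
    have e2 : ‖(1 - (starRingEnd ℂ) z₁ * z₀)‖ = ‖d‖ := by
      rw [hd_def, ← Complex.norm_conj (1 - (starRingEnd ℂ) z₁ * z₀), map_sub, map_one, map_mul,
        Complex.conj_conj, mul_comm]
    rw [norm_div, e1, e2, hr_def, hu_def, norm_div]
  have hLeq : hypDist z₀ z₁ = (1/2) * Real.log ((1+r)/(1-r)) := by
    rw [hypDist, habs_eq]
  have hL0 : 0 ≤ hypDist z₀ z₁ := by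
    rw [hLeq]
    apply mul_nonneg (by norm_num)
    apply Real.log_nonneg
    rw [le_div_iff₀ (by linarith)]
    linarith
  have htL : tgh (hypDist z₀ z₁) = r := by rw [hLeq]; exact tgh_log hr0.le hr1
  have hγL : γ (hypDist z₀ z₁) = z₁ := by
    have hD := hDn (hypDist z₀ z₁)
    rw [htL, mul_assoc, hηr] at hD
    show (z₀ + η * ((tgh (hypDist z₀ z₁) : ℝ) : ℂ))
        / (1 + (starRingEnd ℂ) z₀ * η * ((tgh (hypDist z₀ z₁) : ℝ) : ℂ)) = z₁
    rw [htL, mul_assoc, hηr]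
    rw [div_eq_iff hD, hu_def, hd_def]
    have hd' : (1:ℂ) - (starRingEnd ℂ) z₀ * z₁ ≠ 0 := hd_def ▸ hd
    have hd'' : (1:ℂ) - z₁ * (starRingEnd ℂ) z₀ ≠ 0 := by rwa [mul_comm]
    field_simp
    ring
  refine ⟨γ, fun s => Complex.arg (η * (starRingEnd ℂ) (1 + (starRingEnd ℂ) z₀ * η * (tgh s : ℂ))
      / (1 + (starRingEnd ℂ) z₀ * η * (tgh s : ℂ))), hγ0, hγL, hL0, hmemγ, ?_⟩
  intro s
  have hw : ‖(η * (starRingEnd ℂ) (1 + (starRingEnd ℂ) z₀ * η * (tgh s : ℂ))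
      / (1 + (starRingEnd ℂ) z₀ * η * (tgh s : ℂ)))‖ = 1 := by
    rw [norm_div, norm_mul, Complex.norm_conj, habsη, one_mul, div_self]
    exact norm_ne_zero_iff.mpr (hDn s)
  have hexp : Complex.exp (Complex.I * ((Complex.arg (η * (starRingEnd ℂ)
      (1 + (starRingEnd ℂ) z₀ * η * (tgh s : ℂ)) / (1 + (starRingEnd ℂ) z₀ * η * (tgh s : ℂ))) : ℝ) : ℂ))
      = η * (starRingEnd ℂ) (1 + (starRingEnd ℂ) z₀ * η * (tgh s : ℂ))
          / (1 + (starRingEnd ℂ) z₀ * η * (tgh s : ℂ)) := by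
    rw [mul_comm]
    have h2 := Complex.norm_mul_exp_arg_mul_I (η * (starRingEnd ℂ)
      (1 + (starRingEnd ℂ) z₀ * η * (tgh s : ℂ)) / (1 + (starRingEnd ℂ) z₀ * η * (tgh s : ℂ)))
    rw [hw] at h2
    simpa using h2
  rw [hexp]
  exact hderγ s

lemma hasDerivAt_logP (h g : ℂ → ℂ) (hf : SensePreserving h g)
    {γ : ℝ → ℂ} {γ' : ℂ} {s : ℝ} (hmem : γ s ∈ 𝔻) (hγ : HasDerivAt γ γ' s) :
    HasDerivAt (fun t => Real.log ((1 - ‖(γ t)‖ ^ 2) * Real.sqrt (Jf h g (γ t))))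
      ((1 - Complex.normSq (γ s))⁻¹ * (-(2 * (((starRingEnd ℂ) (γ s)) * γ').re))
        + (1/2) * ((Complex.normSq (deriv h (γ s)))⁻¹ *
            (2 * (((starRingEnd ℂ) (deriv h (γ s))) * (γ' • deriv (deriv h) (γ s))).re))
        + (1/2) * ((1 - Complex.normSq (dil h g (γ s)))⁻¹ *
            (-(2 * (((starRingEnd ℂ) (dil h g (γ s))) * (γ' • deriv (dil h g) (γ s))).re)))) s := by
  obtain ⟨hh, hgan, hh', hd⟩ := hf
  set z := γ s with hz
  have hA0 : 0 < 1 - Complex.normSq z := one_sub_normSq_pos hmem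
  have hB0 : 0 < Complex.normSq (deriv h z) := Complex.normSq_pos.2 (hh' z hmem)
  have hC0 : 0 < 1 - Complex.normSq (dil h g z) := by
    have h2 : Complex.normSq (dil h g z) < 1 := by
      rw [← Complex.sq_norm]; nlinarith [norm_nonneg (dil h g z), hd z hmem]
    linarith
  -- analyticity of deriv h and dil on the disk
  have hopen : IsOpen 𝔻 := Metric.isOpen_ball
  have hhan : AnalyticOnNhd ℂ h 𝔻 := hh
  have hgan' : AnalyticOnNhd ℂ g 𝔻 := hgan
  have hdh : ∀ w ∈ 𝔻, AnalyticAt ℂ (deriv h) w := hhan.deriv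
  have hdg : ∀ w ∈ 𝔻, AnalyticAt ℂ (deriv g) w := hgan'.deriv
  have hdil : ∀ w ∈ 𝔻, AnalyticAt ℂ (dil h g) w := fun w hw =>
    (hdg w hw).div (hdh w hw) (hh' w hw)
  -- derivative of components along γ
  have hHγ : HasDerivAt (fun t => deriv h (γ t)) (γ' • deriv (deriv h) z) s :=
    ((hdh z hmem).differentiableAt.hasDerivAt).scomp s hγ
  have hWγ : HasDerivAt (fun t => dil h g (γ t)) (γ' • deriv (dil h g) z) s :=
    ((hdil z hmem).differentiableAt.hasDerivAt).scomp s hγ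
  have hA : HasDerivAt (fun t => 1 - Complex.normSq (γ t))
      (-(2 * (((starRingEnd ℂ) z) * γ').re)) s := (hasDerivAt_normSq_comp hγ).const_sub 1
  have hB : HasDerivAt (fun t => Complex.normSq (deriv h (γ t)))
      (2 * (((starRingEnd ℂ) (deriv h z)) * (γ' • deriv (deriv h) z)).re) s :=
    hasDerivAt_normSq_comp hHγ
  have hC : HasDerivAt (fun t => 1 - Complex.normSq (dil h g (γ t)))
      (-(2 * (((starRingEnd ℂ) (dil h g z)) * (γ' • deriv (dil h g) z)).re)) s :=
    (hasDerivAt_normSq_comp hWγ).const_sub 1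
  -- log of each
  have hlA := (Real.hasDerivAt_log hA0.ne').comp s hA
  have hlB := (Real.hasDerivAt_log hB0.ne').comp s hB
  have hlC := (Real.hasDerivAt_log hC0.ne').comp s hC
  have hφ := (hlA.add (hlB.const_mul (1/2 : ℝ))).add (hlC.const_mul (1/2 : ℝ))
  have heq : (fun t => Real.log ((1 - ‖(γ t)‖ ^ 2) * Real.sqrt (Jf h g (γ t))))
      =ᶠ[nhds s] (fun t => (Real.log (1 - Complex.normSq (γ t))
          + (1/2) * Real.log (Complex.normSq (deriv h (γ t))))
          + (1/2) * Real.log (1 - Complex.normSq (dil h g (γ t)))) := by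
    have hmem' : γ ⁻¹' 𝔻 ∈ nhds s := hγ.continuousAt.preimage_mem_nhds (hopen.mem_nhds hmem)
    filter_upwards [hmem'] with t ht
    rw [logP_decomp h g ⟨hh, hgan, hh', hd⟩ ht]
  have hres := hφ.congr_of_eventuallyEq heq
  convert hres using 1


lemma stmt15_part1 (h g : ℂ → ℂ) (hf : SensePreserving h g) :
    ∀ (γ : ℝ → ℂ) (θ : ℝ → ℝ) (L : ℝ), 0 ≤ L →
      (∀ s ∈ Set.Icc 0 L, γ s ∈ 𝔻) →
      (∀ s ∈ Set.Icc 0 L,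
        HasDerivAt γ ((((1 - ‖(γ s)‖ ^ 2 : ℝ) : ℂ)) * Complex.exp (Complex.I * (θ s : ℂ))) s) →
      ∀ s ∈ Set.Icc 0 L,
        HasDerivAt (fun t => Real.log ((1 - ‖(γ t)‖ ^ 2) * Real.sqrt (Jf h g (γ t))))
          (2 * (Af h g (γ s) * Complex.exp (Complex.I * (θ s : ℂ))).re) s := by
  intro γ θ L hL hmem hder s hs
  have hz : γ s ∈ 𝔻 := hmem s hs
  have hkey := hasDerivAt_logP h g hf hz (hder s hs)
  convert hkey using 1
  obtain ⟨hh, hgan, hh', hd⟩ := hf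
  have hA0 : 0 < 1 - Complex.normSq (γ s) := one_sub_normSq_pos hz
  have hC0 : 0 < 1 - Complex.normSq (dil h g (γ s)) := by
    have h2 : Complex.normSq (dil h g (γ s)) < 1 := by
      rw [← Complex.sq_norm]; nlinarith [norm_nonneg (dil h g (γ s)), hd (γ s) hz]
    linarith
  have hcast1 : ((1 - ‖(γ s)‖ ^ 2 : ℝ) : ℂ)
      = ((1 - Complex.normSq (γ s) : ℝ) : ℂ) := by rw [Complex.sq_norm]
  have hcast2 : ((1 - ‖(dil h g (γ s))‖ ^ 2 : ℝ) : ℂ)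
      = ((1 - Complex.normSq (dil h g (γ s)) : ℝ) : ℂ) := by rw [Complex.sq_norm]
  simp only [Af, Pf]
  rw [hcast1, hcast2]
  exact (re_identity (1 - Complex.normSq (γ s)) (1 - Complex.normSq (dil h g (γ s)))
    hA0.ne' hC0.ne' (γ s) (deriv h (γ s)) (deriv (deriv h) (γ s)) (dil h g (γ s))
    (deriv (dil h g) (γ s)) (Complex.exp (Complex.I * (θ s : ℂ))) (hh' (γ s) hz)).symm

lemma stmt15_part2 (h g : ℂ → ℂ) (hf : SensePreserving h g) :
    ∀ α : ℝ, (∀ z ∈ 𝔻, ‖(Af h g z)‖ ≤ α) →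
      ∀ z₀ ∈ 𝔻, ∀ z₁ ∈ 𝔻,
        Real.exp (-(2 * α * hypDist z₀ z₁)) ≤
            ((1 - ‖z₁‖ ^ 2) * Real.sqrt (Jf h g z₁)) /
              ((1 - ‖z₀‖ ^ 2) * Real.sqrt (Jf h g z₀)) ∧
        ((1 - ‖z₁‖ ^ 2) * Real.sqrt (Jf h g z₁)) /
            ((1 - ‖z₀‖ ^ 2) * Real.sqrt (Jf h g z₀)) ≤
          Real.exp (2 * α * hypDist z₀ z₁) := by
  intro α hα z₀ hz₀ z₁ hz₁
  obtain ⟨hh, hgan, hh', hd⟩ := hf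
  have hP : ∀ z ∈ 𝔻, 0 < (1 - ‖z‖ ^ 2) * Real.sqrt (Jf h g z) := by
    intro z hz
    have h1 : ‖z‖ < 1 := mem_disk_iff.1 hz
    have h2 : 0 < 1 - ‖z‖ ^ 2 := by nlinarith [norm_nonneg z]
    exact mul_pos h2 (Real.sqrt_pos.2 (Jf_pos h g (hh' z hz) (hd z hz)))
  by_cases hzz : z₁ = z₀
  · subst hzz
    have h0 : hypDist z₁ z₁ = 0 := by simp [hypDist]
    rw [h0, div_self (hP z₁ hz₁).ne']
    norm_num
  · obtain ⟨γ, θ, hγ0, hγL, hL0, hmemγ, hderγ⟩ := geodesic_exists hz₀ hz₁ hzz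
    set L := hypDist z₀ z₁ with hL_def
    have hder' := stmt15_part1 h g ⟨hh, hgan, hh', hd⟩ γ θ L hL0
      (fun s _ => hmemγ s) (fun s _ => hderγ s)
    have hwithin : ∀ x ∈ Set.Icc (0:ℝ) L,
        HasDerivWithinAt (fun t => Real.log ((1 - ‖(γ t)‖ ^ 2) * Real.sqrt (Jf h g (γ t))))
          (2 * (Af h g (γ x) * Complex.exp (Complex.I * (θ x : ℂ))).re) (Set.Icc 0 L) x :=
      fun x hx => (hder' x hx).hasDerivWithinAt
    have hbnd : ∀ x ∈ Set.Ico (0:ℝ) L,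
        ‖2 * (Af h g (γ x) * Complex.exp (Complex.I * (θ x : ℂ))).re‖ ≤ 2 * α := by
      intro x hx
      have hmx : γ x ∈ 𝔻 := hmemγ x
      have hE : ‖(Complex.exp (Complex.I * (θ x : ℂ)))‖ = 1 := by
        rw [Complex.norm_exp]
        simp [Complex.mul_re]
      have h1 : |(Af h g (γ x) * Complex.exp (Complex.I * (θ x : ℂ))).re|
          ≤ ‖(Af h g (γ x) * Complex.exp (Complex.I * (θ x : ℂ)))‖ :=
        Complex.abs_re_le_norm _
      rw [norm_mul, hE, mul_one] at h1
      have h2 := hα (γ x) hmx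
      rw [Real.norm_eq_abs, abs_mul]
      rw [show |(2:ℝ)| = 2 by norm_num]
      nlinarith [abs_nonneg ((Af h g (γ x) * Complex.exp (Complex.I * (θ x : ℂ))).re)]
    have hest := norm_image_sub_le_of_norm_deriv_le_segment' hwithin hbnd L
      (Set.right_mem_Icc.2 hL0)
    rw [Real.norm_eq_abs, hγ0, hγL] at hest
    set P₀ := (1 - ‖z₀‖ ^ 2) * Real.sqrt (Jf h g z₀) with hP₀_def
    set P₁ := (1 - ‖z₁‖ ^ 2) * Real.sqrt (Jf h g z₁) with hP₁_def
    have hP₀ : 0 < P₀ := hP z₀ hz₀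
    have hP₁ : 0 < P₁ := hP z₁ hz₁
    have hratio : P₁ / P₀ = Real.exp (Real.log P₁ - Real.log P₀) := by
      rw [Real.exp_sub, Real.exp_log hP₁, Real.exp_log hP₀]
    have habs := abs_le.1 hest
    constructor
    · rw [hratio]
      apply Real.exp_le_exp.2
      have := habs.1
      linarith
    · rw [hratio]
      apply Real.exp_le_exp.2
      have := habs.2
      linarith


/-- along a curve γ parametrized by hyperbolic arclength
(γ'(s) = (1-|γ(s)|²)e^{iθ(s)}), one has
(d/ds) log((1-|γ|²)J_f(γ)^{1/2}) = 2 Re(A_f(γ)e^{iθ}); consequently, if |A_f| ≤ α on 𝔻,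
then exp(-2αρ(z₀,z₁)) ≤ ((1-|z₁|²)J_f(z₁)^{1/2})/((1-|z₀|²)J_f(z₀)^{1/2}) ≤ exp(2αρ(z₀,z₁)). -/
theorem stmt_15 (h g : ℂ → ℂ) (hf : SensePreserving h g) :
    (∀ (γ : ℝ → ℂ) (θ : ℝ → ℝ) (L : ℝ), 0 ≤ L →
      (∀ s ∈ Set.Icc 0 L, γ s ∈ 𝔻) →
      (∀ s ∈ Set.Icc 0 L,
        HasDerivAt γ ((((1 - ‖(γ s)‖ ^ 2 : ℝ) : ℂ)) * Complex.exp (Complex.I * (θ s : ℂ))) s) →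
      ∀ s ∈ Set.Icc 0 L,
        HasDerivAt (fun t => Real.log ((1 - ‖(γ t)‖ ^ 2) * Real.sqrt (Jf h g (γ t))))
          (2 * (Af h g (γ s) * Complex.exp (Complex.I * (θ s : ℂ))).re) s) ∧
    (∀ α : ℝ, (∀ z ∈ 𝔻, ‖(Af h g z)‖ ≤ α) →
      ∀ z₀ ∈ 𝔻, ∀ z₁ ∈ 𝔻,
        Real.exp (-(2 * α * hypDist z₀ z₁)) ≤
            ((1 - ‖z₁‖ ^ 2) * Real.sqrt (Jf h g z₁)) /
              ((1 - ‖z₀‖ ^ 2) * Real.sqrt (Jf h g z₀)) ∧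
        ((1 - ‖z₁‖ ^ 2) * Real.sqrt (Jf h g z₁)) /
            ((1 - ‖z₀‖ ^ 2) * Real.sqrt (Jf h g z₀)) ≤
          Real.exp (2 * α * hypDist z₀ z₁)) := by
  constructor
  · exact stmt15_part1 h g hf
  · exact stmt15_part2 h g hf
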